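/- Let R be a commutative Noetherian ring of prime characteristic p > 0, let 1 ≤ t < s be real numbers, let I be an ideal of R, and let r be a natural number with r ≥ (μ(I) − 1)(s − t)/(t(s − 1)). Then for every n ∈ ℕ, the weak t-closure of I^{n+r} is contained in the weak s-closure of I^n. -/

import Mathlib

open Pointwise

/-- `R°`: the set of elements of `R` not contained in any minimal prime of `R`. -/
def RCirc (R : Type*) [CommRing R] : Set R :=
  {c | ∀ P ∈ minimalPrimes R, c ∉ P}

/-- The `q`-th Frobenius power `I^[q]` of an ideal `I`, generated by `q`-th powers
of elements of `I`. -/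
def frobPow {R : Type*} [CommRing R] (I : Ideal R) (q : ℕ) : Ideal R :=
  Ideal.span ((fun f => f ^ q) '' (I : Set R))

/-- The `(s,q)` mixed power `I^(s,q) = I^⌈sq⌉ + I^[q]`. -/
noncomputable def mixedPow {R : Type*} [CommRing R] (I : Ideal R) (s : ℝ) (q : ℕ) : Ideal R :=
  I ^ ⌈s * (q : ℝ)⌉₊ + frobPow I q

/-- The weak `s`-closure of `I`: elements `x` such that there is `c ∈ R°` with
`c·x^q ∈ I^(s,q)` for all sufficiently large powers `q = p^e` of `p`. -/
def weakCl {R : Type*} [CommRing R] (p : ℕ) (I : Ideal R) (s : ℝ) : Set R :=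
  {x | ∃ c ∈ RCirc R, ∃ N : ℕ, ∀ e : ℕ, N ≤ e → c * x ^ p ^ e ∈ mixedPow I s (p ^ e)}

/-- The tight closure `I*` of `I`. -/
def tightCl {R : Type*} [CommRing R] (p : ℕ) (I : Ideal R) : Set R :=
  {x | ∃ c ∈ RCirc R, ∃ N : ℕ, ∀ e : ℕ, N ≤ e → c * x ^ p ^ e ∈ frobPow I (p ^ e)}

/-- The integral closure of `I`: elements `x` such that there is `c ∈ R°` with
`c·x^n ∈ I^n` for all sufficiently large `n`. -/
def intCl {R : Type*} [CommRing R] (I : Ideal R) : Set R :=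
  {x | ∃ c ∈ RCirc R, ∃ N : ℕ, ∀ n : ℕ, N ≤ n → c * x ^ n ∈ I ^ n}

/-- The `α`-th rational power `I_α` of `I`, for rational `α = a/b ≥ 0`:
elements `x` with `x^b` in the integral closure of `I^a`. -/
noncomputable def ratPow {R : Type*} [CommRing R] (I : Ideal R) (α : ℚ) : Set R :=
  {x | x ^ α.den ∈ intCl (I ^ α.num.toNat)}

/-- `μ(I)`: the minimal number of generators of `I`. -/
noncomputable def mu {R : Type*} [CommRing R] (I : Ideal R) : ℕ :=
  sInf {m : ℕ | ∃ s : Finset R, s.card = m ∧ Ideal.span (s : Set R) = I}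

/-- An ideal has positive height if it is not contained in any minimal prime. -/
def PosHeight {R : Type*} [CommRing R] (I : Ideal R) : Prop :=
  ∀ P ∈ minimalPrimes R, ¬ I ≤ P

section BSHelpers

variable {R : Type*} [CommRing R]

variable {R : Type*} [CommRing R]

lemma frobPow_mono {I J : Ideal R} (h : I ≤ J) (q : ℕ) : frobPow I q ≤ frobPow J q :=
  Ideal.span_mono (Set.image_mono h)

lemma pow_mem_frobPow {I : Ideal R} {x : R} (hx : x ∈ I) (q : ℕ) : x ^ q ∈ frobPow I q :=
  Ideal.subset_span ⟨x, hx, rfl⟩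

lemma prod_pow_mem (I : Ideal R) (G : Finset R) (e : R → ℕ) (h : ∀ g ∈ G, g ∈ I) :
    (∏ g ∈ G, g ^ e g) ∈ I ^ (∑ g ∈ G, e g) := by
  classical
  induction G using Finset.induction_on with
  | empty => simp [Ideal.one_eq_top]
  | @insert a s hx ih =>
      rw [Finset.prod_insert hx, Finset.sum_insert hx, pow_add]
      exact Ideal.mul_mem_mul (Ideal.pow_mem_pow (h a (Finset.mem_insert_self a s)) _)
        (ih fun g hg => h g (Finset.mem_insert_of_mem hg))

lemma key_pigeonhole (I : Ideal R) (G : Finset R) (hG : Ideal.span (G : Set R) = I)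
    (n q D : ℕ) (hq : 1 ≤ q) (hD : (n - 1) * q + G.card * (q - 1) + 1 ≤ D) :
    I ^ D ≤ frobPow (I ^ n) q := by
  classical
  have hpow : I ^ D = Ideal.span ((G : Set R) ^ D) := by
    conv_lhs => rw [← hG]
    exact Submodule.span_pow _ _
  rw [hpow]
  apply Ideal.span_le.mpr
  rintro x hx
  obtain ⟨f, hf⟩ := Set.mem_pow.mp hx
  have hx' : ∏ i : Fin D, (f i : R) = x := by
    rw [← hf, ← List.prod_ofFn]
  set c : R → ℕ := fun g => (Finset.univ.filter (fun i : Fin D => (f i : R) = g)).card with hc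
  have hmaps : ∀ i ∈ (Finset.univ : Finset (Fin D)), (f i : R) ∈ G := fun i _ => (f i).2
  have hsum : ∑ g ∈ G, c g = D := by
    rw [← Finset.card_eq_sum_card_fiberwise hmaps, Finset.card_univ, Fintype.card_fin]
  have hprod : ∏ g ∈ G, g ^ c g = x := by
    rw [← hx', ← Finset.prod_fiberwise_of_maps_to hmaps (fun i => (f i : R))]
    refine Finset.prod_congr rfl fun g _ => ?_
    rw [Finset.prod_congr rfl (fun i hi => (Finset.mem_filter.mp hi).2), Finset.prod_const, hc]
  have hb : n ≤ ∑ g ∈ G, c g / q := by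
    by_contra hlt
    push_neg at hlt
    have h1 : ∀ g ∈ G, c g ≤ q * (c g / q) + (q - 1) := by
      intro g _
      have := Nat.div_add_mod (c g) q
      have h2 : c g % q ≤ q - 1 := Nat.le_pred_of_lt (Nat.mod_lt _ hq)
      omega
    have h3 : D ≤ q * (∑ g ∈ G, c g / q) + G.card * (q - 1) := by
      calc D = ∑ g ∈ G, c g := hsum.symm
      _ ≤ ∑ g ∈ G, (q * (c g / q) + (q - 1)) := Finset.sum_le_sum h1
      _ = q * (∑ g ∈ G, c g / q) + G.card * (q - 1) := by
          rw [Finset.sum_add_distrib, ← Finset.mul_sum, Finset.sum_const, smul_eq_mul]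
    have h4 : ∑ g ∈ G, c g / q ≤ n - 1 := by omega
    have h5 := Nat.mul_le_mul_left q h4
    have h6 : (n - 1) * q = q * (n - 1) := Nat.mul_comm _ _
    omega
  have hy : (∏ g ∈ G, g ^ (c g / q)) ∈ I ^ n := by
    have := prod_pow_mem I G (fun g => c g / q) (fun g hg => hG ▸ Ideal.subset_span hg)
    exact Ideal.pow_le_pow_right hb this
  have hxe : x = (∏ g ∈ G, g ^ (c g / q)) ^ q * ∏ g ∈ G, g ^ (c g % q) := by
    rw [← hprod, ← Finset.prod_pow, ← Finset.prod_mul_distrib]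
    refine Finset.prod_congr rfl fun g _ => ?_
    rw [← pow_mul, ← pow_add]
    congr 1
    exact (Nat.div_add_mod' (c g) q).symm
  rw [hxe]
  exact Ideal.mul_mem_right _ _ (pow_mem_frobPow hy q)




lemma arith18 (t s : ℝ) (ht : 1 ≤ t) (hts : t < s) (μ n r : ℕ) (hn : 1 ≤ n)
    (hr : ((μ : ℝ) - 1) * (s - t) / (t * (s - 1)) ≤ (r : ℝ)) :
    ∃ Q : ℕ, 1 ≤ Q ∧ ∀ q : ℕ, 1 ≤ q → Q ≤ q →
      n * ⌈s * (q : ℝ)⌉₊ ≤ (n + r) * ⌈t * (q : ℝ)⌉₊ ∨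
      (n - 1) * q + μ * (q - 1) + 1 ≤ (n + r) * ⌈t * (q : ℝ)⌉₊ := by
  have ht0 : (0:ℝ) < t := lt_of_lt_of_le one_pos ht
  have hs1 : (1:ℝ) < s := lt_of_le_of_lt ht hts
  have hts0 : (0:ℝ) < t * (s - 1) := mul_pos ht0 (by linarith)
  have hr' : ((μ : ℝ) - 1) * (s - t) ≤ (r : ℝ) * (t * (s - 1)) :=
    (div_le_iff₀ hts0).mp hr
  by_cases hμ : μ ≤ 1
  · -- small μ: Frobenius route always
    refine ⟨1, le_refl 1, fun q hq1 _ => Or.inr ?_⟩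
    have hY : t * (q:ℝ) ≤ (⌈t * (q:ℝ)⌉₊ : ℝ) := Nat.le_ceil _
    have hq0 : (0:ℝ) ≤ (q:ℝ) := Nat.cast_nonneg q
    have hμ' : (μ:ℝ) ≤ 1 := by exact_mod_cast hμ
    have hcast : ((n - 1 : ℕ) : ℝ) = (n:ℝ) - 1 := by
      rw [Nat.cast_sub hn]; norm_num
    have hcastq : ((q - 1 : ℕ) : ℝ) = (q:ℝ) - 1 := by
      rw [Nat.cast_sub hq1]; norm_num
    have : (((n - 1) * q + μ * (q - 1) + 1 : ℕ) : ℝ) ≤ (((n + r) * ⌈t * (q:ℝ)⌉₊ : ℕ) : ℝ) := by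
      push_cast [hcast, hcastq]
      have hn1 : (1:ℝ) ≤ (n:ℝ) := by exact_mod_cast hn
      have hq1' : (1:ℝ) ≤ (q:ℝ) := by exact_mod_cast hq1
      nlinarith [mul_nonneg (by positivity : (0:ℝ) ≤ (n:ℝ) + r) (sub_nonneg.mpr hY),
        mul_le_mul_of_nonneg_right ht (le_of_lt (lt_of_lt_of_le one_pos hq1')),
        mul_nonneg (Nat.cast_nonneg r) hq0]
    exact_mod_cast this
  · push_neg at hμ
    have hM1 : (1:ℝ) ≤ (μ:ℝ) - 1 := by
      have : (2:ℝ) ≤ (μ:ℝ) := by exact_mod_cast hμ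
      linarith
    set M : ℝ := (μ:ℝ) - 1 with hMdef
    by_cases hcase : ((n:ℝ) + r) * t < (n:ℝ) + M
    · -- power route for large q
      have hns : (n:ℝ) * (s - 1) < M := by
        by_contra hcon
        push_neg at hcon
        have h1 : (0:ℝ) ≤ t - 1 := by linarith
        nlinarith [mul_le_mul_of_nonneg_right hcon h1]
      have hA : (0:ℝ) < (s - t) * (M - (n:ℝ) * (s - 1)) := by
        apply mul_pos <;> linarith
      have hfac : (s - t) * (M - (n:ℝ) * (s - 1)) ≤ (((n:ℝ) + r) * t - (n:ℝ) * s) * (s - 1) := by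
        nlinarith
      set A : ℝ := (s - t) * (M - (n:ℝ) * (s - 1)) with hAdef
      refine ⟨max 1 ⌈(n:ℝ) * (s - 1) / A⌉₊, le_max_left _ _, fun q hq1 hqQ => Or.inl ?_⟩
      have hqA : (n:ℝ) * (s - 1) ≤ A * q := by
        have h2 : ((n:ℝ) * (s - 1) / A) ≤ (q:ℝ) := by
          have := le_trans (le_max_right 1 ⌈(n:ℝ) * (s - 1) / A⌉₊) hqQ
          calc (n:ℝ) * (s - 1) / A ≤ (⌈(n:ℝ) * (s - 1) / A⌉₊ : ℝ) := Nat.le_ceil _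
          _ ≤ (q:ℝ) := by exact_mod_cast this
        calc (n:ℝ) * (s - 1) = ((n:ℝ) * (s - 1) / A) * A := by field_simp
        _ ≤ (q:ℝ) * A := mul_le_mul_of_nonneg_right h2 (le_of_lt hA)
        _ = A * q := mul_comm _ _
      have hq0 : (0:ℝ) ≤ (q:ℝ) := Nat.cast_nonneg q
      have hX : (⌈s * (q:ℝ)⌉₊ : ℝ) < s * q + 1 :=
        Nat.ceil_lt_add_one (by positivity)
      have hY : t * (q:ℝ) ≤ (⌈t * (q:ℝ)⌉₊ : ℝ) := Nat.le_ceil _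
      have key : (n:ℝ) * ⌈s * (q:ℝ)⌉₊ ≤ ((n:ℝ) + r) * ⌈t * (q:ℝ)⌉₊ := by
        have h3 : A * q ≤ ((((n:ℝ) + r) * t - (n:ℝ) * s) * (s - 1)) * q :=
          mul_le_mul_of_nonneg_right hfac hq0
        -- so ((n+r)t - ns) * q * (s-1) ≥ n * (s-1), hence ((n+r)t - ns) * q ≥ n
        have h4 : (n:ℝ) ≤ (((n:ℝ) + r) * t - (n:ℝ) * s) * q := by
          nlinarith
        nlinarith [mul_nonneg (by positivity : (0:ℝ) ≤ (n:ℝ) + r) (sub_nonneg.mpr hY),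
          mul_le_mul_of_nonneg_left (le_of_lt hX) (by positivity : (0:ℝ) ≤ (n:ℝ))]
      exact_mod_cast key
    · -- Frobenius route, all q
      push_neg at hcase
      refine ⟨1, le_refl 1, fun q hq1 _ => Or.inr ?_⟩
      have hY : t * (q:ℝ) ≤ (⌈t * (q:ℝ)⌉₊ : ℝ) := Nat.le_ceil _
      have hq1' : (1:ℝ) ≤ (q:ℝ) := by exact_mod_cast hq1
      have hcast : ((n - 1 : ℕ) : ℝ) = (n:ℝ) - 1 := by
        rw [Nat.cast_sub hn]; norm_num
      have hcastq : ((q - 1 : ℕ) : ℝ) = (q:ℝ) - 1 := by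
        rw [Nat.cast_sub hq1]; norm_num
      have hq0 : (0:ℝ) ≤ (q:ℝ) := Nat.cast_nonneg q
      have e1 : ((n:ℝ) + r) * (t * q) ≤ ((n:ℝ) + r) * (⌈t * (q:ℝ)⌉₊ : ℝ) :=
        mul_le_mul_of_nonneg_left hY (by positivity)
      have e2 : ((n:ℝ) + M) * q ≤ ((n:ℝ) + r) * (t * q) := by
        rw [← mul_assoc]
        exact mul_le_mul_of_nonneg_right hcase hq0
      have e3 : ((n:ℝ) - 1) * q + (M + 1) * ((q:ℝ) - 1) + 1 ≤ ((n:ℝ) + M) * q := by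
        linarith [hM1]
      have hμ' : (μ:ℝ) = M + 1 := by rw [hMdef]; ring
      have : (((n - 1) * q + μ * (q - 1) + 1 : ℕ) : ℝ) ≤ (((n + r) * ⌈t * (q:ℝ)⌉₊ : ℕ) : ℝ) := by
        push_cast [hcast, hcastq]
        rw [hμ']
        linarith [e1, e2, e3]
      exact_mod_cast this

lemma mixed_incl18 [IsNoetherianRing R] (I : Ideal R) (t s : ℝ)
    (ht : 1 ≤ t) (hts : t < s) (r n : ℕ) (hn : 1 ≤ n)
    (hr : ((mu I : ℝ) - 1) * (s - t) / (t * (s - 1)) ≤ (r : ℝ)) :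
    ∃ Q : ℕ, 1 ≤ Q ∧ ∀ q : ℕ, Q ≤ q → mixedPow (I ^ (n + r)) t q ≤ mixedPow (I ^ n) s q := by
  obtain ⟨G, hGcard, hGspan⟩ :
      mu I ∈ {m : ℕ | ∃ s : Finset R, s.card = m ∧ Ideal.span (s : Set R) = I} := by
    apply Nat.sInf_mem
    obtain ⟨S, hS⟩ := IsNoetherian.noetherian I
    exact ⟨S.card, S, rfl, hS⟩
  obtain ⟨Q, hQ1, hQ⟩ := arith18 t s ht hts (mu I) n r hn hr
  refine ⟨Q, hQ1, fun q hq => ?_⟩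
  have hq1 : 1 ≤ q := le_trans hQ1 hq
  rw [mixedPow, mixedPow, Submodule.add_eq_sup, Submodule.add_eq_sup]
  apply sup_le
  · rw [← pow_mul]
    rcases hQ q hq1 hq with h | h
    · refine le_trans (Ideal.pow_le_pow_right h) (le_trans ?_ le_sup_left)
      rw [pow_mul]
    · exact le_trans
        (key_pigeonhole I G hGspan n q ((n + r) * ⌈t * (q:ℝ)⌉₊) hq1 (by rw [hGcard]; exact h))
        le_sup_right
  · exact le_trans (frobPow_mono (Ideal.pow_le_pow_right (Nat.le_add_right n r)) q) le_sup_right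

end BSHelpers

/-- Briançon–Skoda for `s`-closures: for `1 ≤ t < s` and
`r ≥ (μ(I) − 1)(s − t)/(t(s − 1))`, the weak `t`-closure of `I^{n+r}` is contained in the
weak `s`-closure of `I^n` for every `n`. -/


theorem stmt18 {R : Type*} [CommRing R] [IsNoetherianRing R]
    (p : ℕ) (hp : p.Prime) (hcp : CharP R p)
    (t s : ℝ) (ht : 1 ≤ t) (hts : t < s) (I : Ideal R) (r : ℕ)
    (hr : ((mu I : ℝ) - 1) * (s - t) / (t * (s - 1)) ≤ (r : ℝ)) :
    ∀ n : ℕ, weakCl p (I ^ (n + r)) t ⊆ weakCl p (I ^ n) s := by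
  intro n
  rcases Nat.eq_zero_or_pos n with rfl | hn
  · intro x _
    refine ⟨1, fun P hP h1 => hP.1.1.ne_top ((Ideal.eq_top_iff_one P).mpr h1), 0, fun e _ => ?_⟩
    have htop : mixedPow ((I : Ideal R) ^ (0 : ℕ)) s (p ^ e) = ⊤ := by
      rw [mixedPow, pow_zero, Ideal.one_eq_top, Ideal.top_pow, Submodule.add_eq_sup, top_sup_eq]
    rw [htop]
    exact Submodule.mem_top
  · intro x hx
    obtain ⟨c, hc, N, hN⟩ := hx
    obtain ⟨Q, _, hQ⟩ := mixed_incl18 I t s ht hts r n hn hr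
    refine ⟨c, hc, max N Q, fun e he => ?_⟩
    have h1 : Q ≤ p ^ e :=
      le_trans (le_trans (le_max_right N Q) he) (le_of_lt (Nat.lt_pow_self hp.one_lt : e < p ^ e))
    exact hQ _ h1 (hN e (le_trans (le_max_left N Q) he))
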